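/- For every prime p, there exists an index n such that a(n) = p, where a is the Yellowstone sequence. -/

import Mathlib

/-- The Yellowstone sequence: a 1 = 1, a 2 = 2, a 3 = 3, and for n ≥ 4,
`a n` is the least positive integer not among `a 1, …, a (n-1)` which shares
a common factor with `a (n-2)` and is coprime to `a (n-1)`. -/
def IsYellowstone (a : ℕ → ℕ) : Prop :=
  a 1 = 1 ∧ a 2 = 2 ∧ a 3 = 3 ∧
  ∀ n, 4 ≤ n →
    IsLeast {k : ℕ | 0 < k ∧ (∀ m, 1 ≤ m → m < n → a m ≠ k) ∧
      1 < Nat.gcd k (a (n - 2)) ∧ Nat.gcd k (a (n - 1)) = 1} (a n)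

lemma ys_mem (a : ℕ → ℕ) (ha : IsYellowstone a) {n : ℕ} (hn : 4 ≤ n) :
    0 < a n ∧ (∀ m, 1 ≤ m → m < n → a m ≠ a n) ∧
      1 < Nat.gcd (a n) (a (n - 2)) ∧ Nat.gcd (a n) (a (n - 1)) = 1 :=
  (ha.2.2.2 n hn).1

lemma ys_min (a : ℕ → ℕ) (ha : IsYellowstone a) {n : ℕ} (hn : 4 ≤ n) {k : ℕ}
    (h0 : 0 < k) (h1 : ∀ m, 1 ≤ m → m < n → a m ≠ k)
    (h2 : 1 < Nat.gcd k (a (n - 2))) (h3 : Nat.gcd k (a (n - 1)) = 1) :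
    a n ≤ k :=
  (ha.2.2.2 n hn).2 ⟨h0, h1, h2, h3⟩

lemma ys_pos (a : ℕ → ℕ) (ha : IsYellowstone a) {n : ℕ} (hn : 1 ≤ n) : 0 < a n := by
  rcases (show n = 1 ∨ n = 2 ∨ n = 3 ∨ 4 ≤ n by omega) with h | h | h | h
  · rw [h, ha.1]; norm_num
  · rw [h, ha.2.1]; norm_num
  · rw [h, ha.2.2.1]; norm_num
  · exact (ys_mem a ha h).1

lemma ys_two_le (a : ℕ → ℕ) (ha : IsYellowstone a) {n : ℕ} (hn : 2 ≤ n) : 2 ≤ a n := by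
  rcases (show n = 2 ∨ n = 3 ∨ 4 ≤ n by omega) with h | h | h
  · rw [h, ha.2.1]
  · rw [h, ha.2.2.1]; norm_num
  · have h2 := (ys_mem a ha h).2.2.1
    have h3 : Nat.gcd (a n) (a (n - 2)) ≤ a n := Nat.gcd_le_left _ (ys_mem a ha h).1
    omega

lemma ys_ne (a : ℕ → ℕ) (ha : IsYellowstone a) {m n : ℕ} (hm : 1 ≤ m) (hmn : m < n) :
    a m ≠ a n := by
  rcases (show (4 ≤ n) ∨ n = 2 ∨ n = 3 by omega) with h | h | h
  · exact (ys_mem a ha h).2.1 m hm hmn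
  · have hm1 : m = 1 := by omega
    rw [hm1, h, ha.1, ha.2.1]; norm_num
  · rcases (show m = 1 ∨ m = 2 by omega) with h1 | h1
    · rw [h1, h, ha.1, ha.2.2.1]; norm_num
    · rw [h1, h, ha.2.1, ha.2.2.1]; norm_num

lemma ys_cop (a : ℕ → ℕ) (ha : IsYellowstone a) {n : ℕ} (hn : 3 ≤ n) :
    Nat.gcd (a n) (a (n - 1)) = 1 := by
  rcases (show n = 3 ∨ 4 ≤ n by omega) with h | h
  · rw [h]; show Nat.gcd (a 3) (a 2) = 1
    rw [ha.2.1, ha.2.2.1]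
    decide
  · exact (ys_mem a ha h).2.2.2

/-- Eventually all terms exceed any bound. -/
lemma ys_large (a : ℕ → ℕ) (ha : IsYellowstone a) (B : ℕ) :
    ∃ N, ∀ n, N < n → B < a n := by
  have hfin : {n : ℕ | 1 ≤ n ∧ a n ≤ B}.Finite := by
    apply Set.Finite.of_finite_image (f := a)
    · apply Set.Finite.subset (Set.finite_Icc 1 B)
      rintro _ ⟨n, ⟨h1, h2⟩, rfl⟩
      exact ⟨ys_pos a ha h1, h2⟩
    · intro x hx y hy hxy
      by_contra hne
      rcases Nat.lt_or_ge x y with h | h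
      · exact ys_ne a ha hx.1 h hxy
      · exact ys_ne a ha hy.1 (by omega) hxy.symm
  obtain ⟨N, hN⟩ := hfin.bddAbove
  refine ⟨N, fun n hn => ?_⟩
  by_contra hB
  have : n ∈ {n : ℕ | 1 ≤ n ∧ a n ≤ B} := ⟨by omega, by omega⟩
  exact absurd (hN this) (by omega)

lemma pow2_bound (q M : ℕ) (hq : 1 ≤ q) :
    ∃ j, M < 2 ^ (j + 1) * q ∧ 2 ^ (j + 1) * q ≤ 2 * max q M := by
  have hex : ∃ j, M < 2 ^ (j + 1) * q := by
    refine ⟨M, ?_⟩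
    have h1 : M < 2 ^ (M + 1) := lt_of_lt_of_le (Nat.lt_two_pow_self (n := M))
      (Nat.pow_le_pow_right (by norm_num) (by omega))
    calc M < 2 ^ (M + 1) * 1 := by simpa using h1
      _ ≤ 2 ^ (M + 1) * q := Nat.mul_le_mul_left _ hq
  classical
  refine ⟨Nat.find hex, Nat.find_spec hex, ?_⟩
  rcases Nat.eq_zero_or_pos (Nat.find hex) with h0 | h0
  · rw [h0]
    have : 2 ^ (0 + 1) * q = 2 * q := by ring
    rw [this]
    exact Nat.mul_le_mul_left 2 (le_max_left _ _)
  · have hlt := Nat.find_min hex (show Nat.find hex - 1 < Nat.find hex by omega)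
    have h1 : 2 ^ (Nat.find hex - 1 + 1) * q ≤ M := Nat.le_of_not_lt hlt
    have h2 : 2 ^ (Nat.find hex + 1) * q = 2 * (2 ^ (Nat.find hex - 1 + 1) * q) := by
      have : Nat.find hex + 1 = (Nat.find hex - 1 + 1) + 1 := by omega
      rw [this, pow_succ]; ring
    rw [h2]
    calc 2 * (2 ^ (Nat.find hex - 1 + 1) * q) ≤ 2 * M := by omega
      _ ≤ 2 * max q M := Nat.mul_le_mul_left 2 (le_max_right _ _)

/-- There are infinitely many even terms. -/
lemma ys_even_inf (a : ℕ → ℕ) (ha : IsYellowstone a) (N : ℕ) :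
    ∃ t, N < t ∧ 2 ∣ a t := by
  by_contra hcon
  push_neg at hcon
  set N₀ := max N 3 with hN₀def
  have hodd : ∀ t, N₀ < t → ¬ 2 ∣ a t := fun t ht => hcon t (by omega)
  set M := (Finset.Icc 1 N₀).sup a with hMdef
  have hMle : ∀ m, 1 ≤ m → m ≤ N₀ → a m ≤ M := fun m h1 h2 =>
    Finset.le_sup (Finset.mem_Icc.mpr ⟨h1, h2⟩)
  -- Claim 1: growth bound
  have C1 : ∀ t, N₀ < t → a (t + 2) ≤ 2 * max ((a t).minFac) M := by
    intro t ht
    have hat2 : 2 ≤ a t := ys_two_le a ha (by omega)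
    have hq : (a t).minFac.Prime := Nat.minFac_prime (by omega)
    obtain ⟨j, hj1, hj2⟩ := pow2_bound ((a t).minFac) M (le_of_lt hq.one_lt)
    set k := 2 ^ (j + 1) * (a t).minFac with hkdef
    have hk2 : 2 ∣ k := ⟨2 ^ j * (a t).minFac, by rw [hkdef, pow_succ]; ring⟩
    have hkq : (a t).minFac ∣ k := dvd_mul_left _ _
    have hkpos : 0 < k := Nat.mul_pos (Nat.pow_pos (by norm_num)) hq.pos
    have hcop1 : Nat.gcd (a (t + 1)) (a t) = 1 := ys_cop a ha (show 3 ≤ t + 1 by omega)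
    have hodd1 : ¬ 2 ∣ a (t + 1) := hodd _ (by omega)
    have hqnd : ¬ (a t).minFac ∣ a (t + 1) := by
      intro hd
      have hdg : (a t).minFac ∣ Nat.gcd (a (t + 1)) (a t) :=
        Nat.dvd_gcd hd (Nat.minFac_dvd _)
      rw [hcop1] at hdg
      have := Nat.le_of_dvd one_pos hdg
      have := hq.two_le
      omega
    have hle : a (t + 2) ≤ k := by
      apply ys_min a ha (show 4 ≤ t + 2 by omega) hkpos
      · intro m hm1 hm2 heq
        have h2m : 2 ∣ a m := heq ▸ hk2
        have hmN : m ≤ N₀ := by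
          by_contra h
          exact hodd m (by omega) h2m
        have := hMle m hm1 hmN
        omega
      · show 1 < Nat.gcd k (a t)
        have hdg : (a t).minFac ∣ Nat.gcd k (a t) := Nat.dvd_gcd hkq (Nat.minFac_dvd _)
        have hgpos : 0 < Nat.gcd k (a t) := Nat.gcd_pos_of_pos_left _ hkpos
        have := Nat.le_of_dvd hgpos hdg
        have := hq.two_le
        omega
      · show Nat.gcd k (a (t + 1)) = 1
        have c2 : Nat.Coprime 2 (a (t + 1)) :=
          (Nat.Prime.coprime_iff_not_dvd Nat.prime_two).mpr hodd1
        have cq : Nat.Coprime ((a t).minFac) (a (t + 1)) :=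
          (Nat.Prime.coprime_iff_not_dvd hq).mpr hqnd
        exact Nat.Coprime.mul (Nat.Coprime.pow_left _ c2) cq
    exact le_trans hle hj2
  -- Claim 2: large terms are primes dividing the term two back
  have C2 : ∀ t, N₀ < t → 2 * M < a (t + 2) →
      a (t + 2) = (Nat.gcd (a (t + 2)) (a t)).minFac := by
    intro t ht hbig
    have hg : 1 < Nat.gcd (a (t + 2)) (a t) :=
      (ys_mem a ha (show 4 ≤ t + 2 by omega)).2.2.1
    set g := Nat.gcd (a (t + 2)) (a t) with hgdef
    have hr : g.minFac.Prime := Nat.minFac_prime (by omega)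
    have hr1 : g.minFac ∣ a (t + 2) := (Nat.minFac_dvd g).trans (Nat.gcd_dvd_left _ _)
    have hr2 : g.minFac ∣ a t := (Nat.minFac_dvd g).trans (Nat.gcd_dvd_right _ _)
    have hat2 : 2 ≤ a t := ys_two_le a ha (by omega)
    have hqr : (a t).minFac ≤ g.minFac := Nat.minFac_le_of_dvd hr.two_le hr2
    have hC1 := C1 t ht
    have h2q : a (t + 2) ≤ 2 * (a t).minFac := by
      rcases max_cases ((a t).minFac) M with ⟨hmax, _⟩ | ⟨hmax, _⟩ <;> omega
    have h2r : a (t + 2) ≤ 2 * g.minFac := by omega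
    obtain ⟨c, hc⟩ := hr1
    have hodd2 : ¬ 2 ∣ a (t + 2) := hodd _ (by omega)
    have hrpos : 0 < g.minFac := hr.pos
    rcases c with _ | _ | c
    · simp at hc; omega
    · simpa using hc
    · exfalso
      have hle2 : g.minFac * (c + 2) ≤ 2 * g.minFac := hc ▸ h2r
      have hc0 : g.minFac * c = 0 := by nlinarith
      rcases Nat.mul_eq_zero.mp hc0 with h | h
      · omega
      · subst h
        exact hodd2 ⟨g.minFac, by rw [hc]; ring⟩
  -- Conclusion
  obtain ⟨N₁, hN₁⟩ := ys_large a ha (2 * M)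
  set t := max N₀ N₁ + 1 with htdef
  have hb1 : 2 * M < a (t + 2) := hN₁ _ (by omega)
  have hb2 : 2 * M < a (t + 4) := hN₁ _ (by omega)
  have e1 := C2 t (by omega) hb1
  have hb2' : 2 * M < a (t + 2 + 2) := by
    have h42 : t + 2 + 2 = t + 4 := by omega
    rw [h42]; exact hb2
  have e2 := C2 (t + 2) (by omega) hb2'
  have hg1 : 1 < Nat.gcd (a (t + 2)) (a t) :=
    (ys_mem a ha (show 4 ≤ t + 2 by omega)).2.2.1
  have hrp : (a (t + 2)).Prime := by
    rw [e1]; exact Nat.minFac_prime (by omega)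
  have hg2 : 1 < Nat.gcd (a (t + 2 + 2)) (a (t + 2)) :=
    (ys_mem a ha (show 4 ≤ t + 2 + 2 by omega)).2.2.1
  have hdvd : (Nat.gcd (a (t + 2 + 2)) (a (t + 2))).minFac ∣ a (t + 2) :=
    (Nat.minFac_dvd _).trans (Nat.gcd_dvd_right _ _)
  have hrp' : (Nat.gcd (a (t + 2 + 2)) (a (t + 2))).minFac.Prime :=
    Nat.minFac_prime (by omega)
  have heq : (Nat.gcd (a (t + 2 + 2)) (a (t + 2))).minFac = a (t + 2) := by
    rcases (hrp.eq_one_or_self_of_dvd _ hdvd) with h | h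
    · exact absurd h hrp'.ne_one
    · exact h
  have : a (t + 2 + 2) = a (t + 2) := by rw [e2, heq]
  exact ys_ne a ha (show 1 ≤ t + 2 by omega) (show t + 2 < t + 2 + 2 by omega) this.symm

/-- Every odd prime divides infinitely many terms. -/
lemma ys_dvd_inf (a : ℕ → ℕ) (ha : IsYellowstone a) {p : ℕ} (hp : p.Prime)
    (hp2 : p ≠ 2) (N : ℕ) : ∃ t, N < t ∧ p ∣ a t := by
  by_contra hcon
  push_neg at hcon
  set N₀ := max N 3 with hN₀def
  have hnd : ∀ t, N₀ < t → ¬ p ∣ a t := fun t ht => hcon t (by omega)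
  set M := (Finset.Icc 1 N₀).sup a with hMdef
  have hMle : ∀ m, 1 ≤ m → m ≤ N₀ → a m ≤ M := fun m h1 h2 =>
    Finset.le_sup (Finset.mem_Icc.mpr ⟨h1, h2⟩)
  obtain ⟨N₁, hN₁⟩ := ys_large a ha (2 * max p M)
  obtain ⟨t, ht, hte⟩ := ys_even_inf a ha (max N₀ N₁)
  obtain ⟨j, hj1, hj2⟩ := pow2_bound p M (le_of_lt hp.one_lt)
  set k := 2 ^ (j + 1) * p with hkdef
  have hk2 : 2 ∣ k := ⟨2 ^ j * p, by rw [hkdef, pow_succ]; ring⟩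
  have hkp : p ∣ k := dvd_mul_left _ _
  have hkpos : 0 < k := Nat.mul_pos (Nat.pow_pos (by norm_num)) hp.pos
  have hcop1 : Nat.gcd (a (t + 1)) (a t) = 1 := ys_cop a ha (show 3 ≤ t + 1 by omega)
  have hodd1 : ¬ 2 ∣ a (t + 1) := by
    intro hd
    have hdg : 2 ∣ Nat.gcd (a (t + 1)) (a t) := Nat.dvd_gcd hd hte
    rw [hcop1] at hdg
    omega
  have hpnd : ¬ p ∣ a (t + 1) := hnd _ (by omega)
  have hle : a (t + 2) ≤ k := by
    apply ys_min a ha (show 4 ≤ t + 2 by omega) hkpos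
    · intro m hm1 hm2 heq
      have hpm : p ∣ a m := heq ▸ hkp
      have hmN : m ≤ N₀ := by
        by_contra h
        exact hnd m (by omega) hpm
      have := hMle m hm1 hmN
      omega
    · show 1 < Nat.gcd k (a t)
      have hdg : 2 ∣ Nat.gcd k (a t) := Nat.dvd_gcd hk2 hte
      have hgpos : 0 < Nat.gcd k (a t) := Nat.gcd_pos_of_pos_left _ hkpos
      omega
    · show Nat.gcd k (a (t + 1)) = 1
      have c2 : Nat.Coprime 2 (a (t + 1)) :=
        (Nat.Prime.coprime_iff_not_dvd Nat.prime_two).mpr hodd1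
      have cp : Nat.Coprime p (a (t + 1)) :=
        (Nat.Prime.coprime_iff_not_dvd hp).mpr hpnd
      exact Nat.Coprime.mul (Nat.Coprime.pow_left _ c2) cp
  have hbig := hN₁ (t + 2) (by omega)
  omega

theorem yellowstone_contains_prime (a : ℕ → ℕ) (ha : IsYellowstone a)
    (p : ℕ) (hp : p.Prime) : ∃ n, 1 ≤ n ∧ a n = p := by
  by_cases hp2 : p = 2
  · exact ⟨2, by omega, by rw [ha.2.1, hp2]⟩
  · by_contra hcon
    push_neg at hcon
    obtain ⟨N₁, hN₁⟩ := ys_large a ha p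
    obtain ⟨t, ht, htd⟩ := ys_dvd_inf a ha hp hp2 (max N₁ 3)
    have hcop1 : Nat.gcd (a (t + 1)) (a t) = 1 := ys_cop a ha (show 3 ≤ t + 1 by omega)
    have hpnd : ¬ p ∣ a (t + 1) := by
      intro hd
      have hdg : p ∣ Nat.gcd (a (t + 1)) (a t) := Nat.dvd_gcd hd htd
      rw [hcop1] at hdg
      have := Nat.le_of_dvd one_pos hdg
      have := hp.two_le
      omega
    have hle : a (t + 2) ≤ p := by
      apply ys_min a ha (show 4 ≤ t + 2 by omega) hp.pos
      · exact fun m hm1 _ => hcon m hm1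
      · show 1 < Nat.gcd p (a t)
        rw [Nat.gcd_eq_left htd]
        exact hp.one_lt
      · show Nat.gcd p (a (t + 1)) = 1
        exact (Nat.Prime.coprime_iff_not_dvd hp).mpr hpnd
    have := hN₁ (t + 2) (by omega)
    omega
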